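/- Let A be a Cayley matrix on a finite abelian group G of order n with diagonalization A = U Γ U* by the normalized character matrix U, let μ be a probability measure with all μ_i > 0 and μ_i N ∈ ℕ, W = D A Dᵀ the model matrix, and M̃ = U* M U. Then for λ ≠ 0 and a unit vector y ∈ ℂᴺ: y is a λ-eigenvector of W if and only if z = (1/√N) U* Dᵀ y is a (λ/N)-eigenvector of M̃Γ and y = (1/√N) D M⁻¹ U z. -/

import Mathlib

open scoped BigOperators ComplexConjugate
open Matrix

/-- The `N × n` block indicator matrix, over `ℂ`. -/
def blockD (N n : ℕ) (k : Fin n → ℕ) : Matrix (Fin N) (Fin n) ℂ :=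
  Matrix.of fun r j =>
    if (∑ i : Fin n, if (i : ℕ) < (j : ℕ) then k i else 0) ≤ (r : ℕ) ∧
        (r : ℕ) < (∑ i : Fin n, if (i : ℕ) < (j : ℕ) then k i else 0) + k j
    then 1 else 0

lemma count_interval (N a b : ℕ) (h : a + b ≤ N) :
    (∑ r : Fin N, if a ≤ (r:ℕ) ∧ (r:ℕ) < a + b then (1:ℂ) else 0) = b := by
  rw [Fin.sum_univ_eq_sum_range (fun r => if a ≤ r ∧ r < a + b then (1:ℂ) else 0) N]
  rw [Finset.sum_ite, Finset.sum_const_zero, add_zero, Finset.sum_const]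
  have : (Finset.range N).filter (fun r => a ≤ r ∧ r < a + b) = Finset.Ico a (a+b) := by
    ext r; simp [Finset.mem_Ico, Finset.mem_range]; omega
  rw [this, Nat.card_Ico]
  simp

lemma DtD (N n : ℕ) (k : Fin n → ℕ) (hksum : ∑ i, k i = N) :
    (blockD N n k)ᵀ * blockD N n k = Matrix.diagonal (fun j => (k j : ℂ)) := by
  set off : Fin n → ℕ := fun j => ∑ i : Fin n, if (i : ℕ) < (j : ℕ) then k i else 0 with hoff
  have hD : ∀ (r : Fin N) (j : Fin n),
      blockD N n k r j = if off j ≤ (r:ℕ) ∧ (r:ℕ) < off j + k j then (1:ℂ) else 0 :=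
    fun r j => rfl
  have hsplit : ∀ j : Fin n, off j + k j = ∑ i : Fin n,
      ((if (i:ℕ) < (j:ℕ) then k i else 0) + (if i = j then k i else 0)) := by
    intro j
    rw [Finset.sum_add_distrib, Finset.sum_ite_eq' Finset.univ j k, if_pos (Finset.mem_univ j)]
  have hle : ∀ j : Fin n, off j + k j ≤ N := by
    intro j
    rw [hsplit j, ← hksum]
    refine Finset.sum_le_sum fun i _ => ?_
    rcases eq_or_ne i j with h | h
    · subst h; simp
    · have : (i:ℕ) ≠ (j:ℕ) := fun hh => h (Fin.ext hh)
      split_ifs <;> omega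
  have hmono : ∀ i j : Fin n, (i:ℕ) < (j:ℕ) → off i + k i ≤ off j := by
    intro i j hij
    rw [hsplit i]
    refine Finset.sum_le_sum fun l _ => ?_
    rcases eq_or_ne l i with h | h
    · subst h; simp [hij]
    · have : (l:ℕ) ≠ (i:ℕ) := fun hh => h (Fin.ext hh)
      split_ifs <;> omega
  clear_value off
  ext i j
  rw [Matrix.mul_apply]
  simp only [Matrix.transpose_apply, hD]
  rcases eq_or_ne i j with rfl | hij
  · rw [Matrix.diagonal_apply_eq]
    rw [← count_interval N (off i) (k i) (hle i)]
    refine Finset.sum_congr rfl fun r _ => ?_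
    split_ifs <;> ring
  · rw [Matrix.diagonal_apply_ne _ hij]
    refine Finset.sum_eq_zero fun r _ => ?_
    have hne : (i:ℕ) ≠ (j:ℕ) := fun hh => hij (Fin.ext hh)
    rcases lt_or_gt_of_ne hne with h | h
    · have hm := hmono i j h
      split_ifs with h1 h2
      · omega
      all_goals simp
    · have hm := hmono j i h
      split_ifs with h1 h2
      · omega
      all_goals simp

lemma char_sum_zero {G : Type*} [CommGroup G] [Fintype G]
    (ψ : G → ℂ) (hmul : ∀ a b, ψ (a*b) = ψ a * ψ b) (x0 : G) (h0 : ψ x0 ≠ 1) :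
    ∑ x : G, ψ x = 0 := by
  have h : (∑ x : G, ψ x) * ψ x0 = ∑ x : G, ψ x := by
    rw [Finset.sum_mul]
    simp_rw [← hmul]
    exact Fintype.sum_equiv (Equiv.mulRight x0) _ _ (fun x => rfl)
  by_contra hS
  exact h0 (by field_simp at h; tauto)

lemma U_unitary (n : ℕ) (hn : 0 < n)
    (G : Type*) [CommGroup G] [Fintype G] [DecidableEq G]
    (g : Fin n ≃ G)
    (χ : Fin n → (G →* ℂ)) (hχuni : ∀ j, ∀ x : G, ‖χ j x‖ = 1)
    (hχinj : Function.Injective χ)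
    (U : Matrix (Fin n) (Fin n) ℂ)
    (hU : ∀ i j, U i j = χ j (g i) / (Real.sqrt n : ℂ)) :
    Uᴴ * U = 1 := by
  have hcard : Fintype.card G = n := by
    rw [← Fintype.card_fin n]; exact (Fintype.card_congr g).symm
  have hnc : ((n:ℝ):ℂ) ≠ 0 := by
    simp [Nat.cast_ne_zero]; omega
  have hs2 : ((Real.sqrt n : ℝ):ℂ) * ((Real.sqrt n : ℝ):ℂ) = ((n:ℝ):ℂ) := by
    rw [← Complex.ofReal_mul, Real.mul_self_sqrt (Nat.cast_nonneg n)]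
  have hconj : ∀ (j : Fin n) (x : G), conj (χ j x) * χ j x = 1 := by
    intro j x
    rw [← Complex.normSq_eq_conj_mul_self]
    rw [Complex.normSq_eq_norm_sq, hχuni j x]
    norm_num
  have key : ∀ i j : Fin n, (∑ x : G, conj (χ i x) * χ j x) = if i = j then ((n:ℝ):ℂ) else 0 := by
    intro i j
    rcases eq_or_ne i j with rfl | hij
    · rw [if_pos rfl]
      rw [Finset.sum_congr rfl fun x _ => hconj i x]
      simp [hcard]
    · rw [if_neg hij]
      have hne : χ i ≠ χ j := fun h => hij (hχinj h)
      obtain ⟨x0, hx0⟩ : ∃ x0, χ i x0 ≠ χ j x0 := by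
        by_contra h
        push_neg at h
        exact hne (MonoidHom.ext h)
      refine char_sum_zero _ (fun a b => ?_) x0 (fun h => hx0 ?_)
      · simp only [_root_.map_mul]; ring
      · have := congrArg (fun t => χ i x0 * t) h
        simp only [mul_one] at this
        rw [← mul_assoc, mul_comm (χ i x0), hconj i x0, one_mul] at this
        exact this.symm
  ext i j
  rw [Matrix.mul_apply, Matrix.one_apply]
  simp only [Matrix.conjTranspose_apply, hU]
  have : ∀ r : Fin n, star (χ i (g r) / ((Real.sqrt n : ℝ):ℂ)) * (χ j (g r) / ((Real.sqrt n : ℝ):ℂ))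
      = conj (χ i (g r)) * χ j (g r) / ((n:ℝ):ℂ) := by
    intro r
    rw [star_div₀, div_mul_div_comm, Complex.star_def, Complex.conj_ofReal, hs2]
  rw [Finset.sum_congr rfl fun r _ => this r, ← Finset.sum_div]
  rw [Fintype.sum_equiv g (fun r => conj (χ i (g r)) * χ j (g r)) (fun x => conj (χ i x) * χ j x) (fun r => rfl)]
  rw [key i j]
  split_ifs
  · exact div_self hnc
  · exact zero_div _

/-- for a Cayley matrix `A = U Γ U*` on a finite abelian group `G` (with `U`
the normalized character matrix), model matrix `W = D A Dᵀ` and `M̃ = U* M U`: for `λ ≠ 0`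
and a unit vector `y`, `y` is a `λ`-eigenvector of `W` iff `z = (1/√N) U* Dᵀ y` is a
`(λ/N)`-eigenvector of `M̃ Γ` and `y = (1/√N) D M⁻¹ U z`. -/
theorem eigvec_W_iff_eigvec_MtGamma
    (n N : ℕ) (hn : 0 < n) (hN : 0 < N)
    (G : Type*) [CommGroup G] [Fintype G] [DecidableEq G]
    (g : Fin n ≃ G)
    (χ : Fin n → (G →* ℂ)) (hχuni : ∀ j, ∀ x : G, ‖χ j x‖ = 1)
    (hχinj : Function.Injective χ)
    (hχsurj : ∀ ψ : G →* ℂ, (∀ x : G, ‖ψ x‖ = 1) → ∃ j, ψ = χ j)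
    (f : G → ℝ) (hf : ∀ x : G, f x = f x⁻¹)
    (A : Matrix (Fin n) (Fin n) ℂ)
    (hA : ∀ i j, A i j = (f ((g i)⁻¹ * g j) : ℂ))
    (U : Matrix (Fin n) (Fin n) ℂ)
    (hU : ∀ i j, U i j = χ j (g i) / (Real.sqrt n : ℂ))
    (γ : Fin n → ℂ) (hΓ : A = U * Matrix.diagonal γ * Uᴴ)
    (μ : Fin n → ℝ) (hμpos : ∀ i, 0 < μ i) (hμsum : ∑ i, μ i = 1)
    (k : Fin n → ℕ) (hkpos : ∀ i, 0 < k i)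
    (hk : ∀ i, (k i : ℝ) = μ i * N) (hksum : ∑ i, k i = N)
    (W : Matrix (Fin N) (Fin N) ℂ)
    (hW : W = blockD N n k * A * (blockD N n k)ᵀ)
    (Mt : Matrix (Fin n) (Fin n) ℂ)
    (hMt : Mt = Uᴴ * Matrix.diagonal (fun i => (μ i : ℂ)) * U)
    (lam : ℝ) (hlam : lam ≠ 0)
    (y : Fin N → ℂ) (hy_unit : star y ⬝ᵥ y = 1) :
    W.mulVec y = (lam : ℂ) • y ↔
      ((Mt * Matrix.diagonal γ).mulVec
          (((Real.sqrt N : ℂ))⁻¹ • (Uᴴ * (blockD N n k)ᵀ).mulVec y) =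
        ((lam / N : ℝ) : ℂ) •
          (((Real.sqrt N : ℂ))⁻¹ • (Uᴴ * (blockD N n k)ᵀ).mulVec y) ∧
      y = ((Real.sqrt N : ℂ))⁻¹ •
          (blockD N n k * Matrix.diagonal (fun i => ((μ i : ℂ))⁻¹) * U).mulVec
            (((Real.sqrt N : ℂ))⁻¹ • (Uᴴ * (blockD N n k)ᵀ).mulVec y)) := by
  set D := blockD N n k with hDdef
  set s : ℂ := (Real.sqrt N : ℂ) with hsdef
  set M' := Matrix.diagonal (fun i => (μ i : ℂ)) with hM'def
  set Mi := Matrix.diagonal (fun i => ((μ i : ℂ))⁻¹) with hMidef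
  have hNc : (N:ℂ) ≠ 0 := Nat.cast_ne_zero.mpr hN.ne'
  have hlamc : (lam:ℂ) ≠ 0 := Complex.ofReal_ne_zero.mpr hlam
  have hs2 : s * s = (N:ℂ) := by
    rw [hsdef, ← Complex.ofReal_mul, Real.mul_self_sqrt (Nat.cast_nonneg N)]
    push_cast; ring
  have hsne : s ≠ 0 := by
    intro h
    rw [h, zero_mul] at hs2
    exact hNc hs2.symm
  have hss : s⁻¹ * s⁻¹ = (N:ℂ)⁻¹ := by rw [← mul_inv, hs2]
  have hlamN : ((lam / N : ℝ) : ℂ) = (lam:ℂ) / (N:ℂ) := by push_cast; ring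
  have hUU : Uᴴ * U = 1 := U_unitary n hn G g χ hχuni hχinj U hU
  have hUUc : U * Uᴴ = 1 := mul_eq_one_comm.mp hUU
  have hDD : Dᵀ * D = Matrix.diagonal (fun j => (k j : ℂ)) := DtD N n k hksum
  have hμne : ∀ i, (μ i : ℂ) ≠ 0 := fun i => Complex.ofReal_ne_zero.mpr (hμpos i).ne'
  have hDD' : Dᵀ * D = (N:ℂ) • M' := by
    rw [hDD, hM'def]
    ext i j
    rcases eq_or_ne i j with rfl | h
    · have hki : (k i : ℂ) = (N:ℂ) * (μ i : ℂ) := by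
        have h1 : ((k i : ℝ) : ℂ) = ((μ i * N : ℝ) : ℂ) := by rw [hk i]
        push_cast at h1
        rw [h1]; ring
      simp [Matrix.diagonal_apply_eq, Matrix.smul_apply, hki]
    · simp [Matrix.diagonal_apply_ne _ h, Matrix.smul_apply]
  have hMMi : M' * Mi = 1 := by
    rw [hM'def, hMidef, Matrix.diagonal_mul_diagonal,
      show (fun i => (μ i:ℂ) * (μ i:ℂ)⁻¹) = fun _ => (1:ℂ) from
        funext fun i => mul_inv_cancel₀ (hμne i), Matrix.diagonal_one]
  have hMiM : Mi * M' = 1 := mul_eq_one_comm.mp hMMi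
  constructor
  · intro hWy
    have hWy' : (D * A * Dᵀ).mulVec y = (lam:ℂ) • y := by rw [← hW]; exact hWy
    have hDt : (Dᵀ * (D * A * Dᵀ)).mulVec y = (lam:ℂ) • Dᵀ.mulVec y := by
      rw [← Matrix.mulVec_mulVec, hWy', Matrix.mulVec_smul]
    have e1 : Dᵀ * (D * A * Dᵀ) = (N:ℂ) • (M' * A * Dᵀ) := by
      simp only [Matrix.mul_assoc]
      rw [← Matrix.mul_assoc Dᵀ D, hDD', Matrix.smul_mul]
    have hMA : (M' * A * Dᵀ).mulVec y = ((lam:ℂ)/(N:ℂ)) • Dᵀ.mulVec y := by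
      rw [e1, Matrix.smul_mulVec] at hDt
      have h2 := congrArg (fun v => (N:ℂ)⁻¹ • v) hDt
      simp only [smul_smul] at h2
      rw [inv_mul_cancel₀ hNc, one_smul] at h2
      rw [h2]
      congr 1
      field_simp
    refine ⟨?_, ?_⟩
    · have hkey : Mt * Matrix.diagonal γ * (Uᴴ * Dᵀ) = Uᴴ * (M' * A * Dᵀ) := by
        rw [hMt, hΓ]; simp only [Matrix.mul_assoc]
      rw [Matrix.mulVec_smul, Matrix.mulVec_mulVec, hkey, ← Matrix.mulVec_mulVec, hMA,
        Matrix.mulVec_smul, Matrix.mulVec_mulVec, hlamN, smul_smul, smul_smul, mul_comm]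
    · have e2 : D * Mi * U * (Uᴴ * Dᵀ) = D * Mi * Dᵀ := by
        simp only [Matrix.mul_assoc]
        rw [← Matrix.mul_assoc U Uᴴ, hUUc, Matrix.one_mul]
      have e3 : D * Mi * Dᵀ * (D * A * Dᵀ) = (N:ℂ) • (D * A * Dᵀ) := by
        simp only [Matrix.mul_assoc]
        rw [← Matrix.mul_assoc Dᵀ D, hDD', Matrix.smul_mul, Matrix.mul_smul, Matrix.mul_smul,
          ← Matrix.mul_assoc Mi M', hMiM, Matrix.one_mul]
      have hyinv : ((lam:ℂ))⁻¹ • (D * A * Dᵀ).mulVec y = y := by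
        rw [hWy', smul_smul, inv_mul_cancel₀ hlamc, one_smul]
      symm
      rw [Matrix.mulVec_smul, Matrix.mulVec_mulVec, e2, smul_smul, hss]
      conv_lhs => rw [← hyinv]
      rw [Matrix.mulVec_smul, Matrix.mulVec_mulVec, e3, Matrix.smul_mulVec, hWy']
      rw [smul_smul, smul_smul, smul_smul]
      have hc : ((N:ℂ)⁻¹ * (lam:ℂ)⁻¹ * (N:ℂ) * (lam:ℂ)) = 1 := by field_simp
      rw [hc, one_smul]
  · rintro ⟨h1, h2⟩
    have hAU : A * U = U * Matrix.diagonal γ := by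
      rw [hΓ, Matrix.mul_assoc (U * Matrix.diagonal γ) Uᴴ U, hUU, Matrix.mul_one]
    have e4 : Mi * U * (Mt * Matrix.diagonal γ) = U * Matrix.diagonal γ := by
      rw [hMt]
      simp only [Matrix.mul_assoc]
      rw [← Matrix.mul_assoc U Uᴴ, hUUc, Matrix.one_mul, ← Matrix.mul_assoc Mi M', hMiM,
        Matrix.one_mul]
    set w : Fin n → ℂ := (Uᴴ * Dᵀ).mulVec y with hwdef
    rw [Matrix.mulVec_smul] at h1
    have h1' : (Mt * Matrix.diagonal γ).mulVec w = ((lam:ℂ)/(N:ℂ)) • w := by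
      have h4 := congrArg (fun v => s • v) h1
      simp only [smul_smul] at h4
      rw [mul_inv_cancel₀ hsne, one_smul] at h4
      have hsc : s * (((lam / N : ℝ):ℂ) * s⁻¹) = (lam:ℂ)/(N:ℂ) := by
        rw [hlamN]; field_simp
      rw [hsc] at h4
      exact h4
    have hUz : (U * Matrix.diagonal γ).mulVec w = ((lam:ℂ)/(N:ℂ)) • (Mi * U).mulVec w := by
      have h5 : (Mi * U).mulVec ((Mt * Matrix.diagonal γ).mulVec w)
          = (Mi * U).mulVec (((lam:ℂ)/(N:ℂ)) • w) := by rw [h1']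
      rw [Matrix.mulVec_mulVec, e4, Matrix.mulVec_smul] at h5
      exact h5
    have e5 : D * A * Dᵀ * (D * Mi * U) = (N:ℂ) • (D * (U * Matrix.diagonal γ)) := by
      simp only [Matrix.mul_assoc]
      rw [← Matrix.mul_assoc Dᵀ D, hDD', Matrix.smul_mul, Matrix.mul_smul, Matrix.mul_smul,
        ← Matrix.mul_assoc M' Mi, hMMi, Matrix.one_mul, hAU]
    rw [hW]
    conv_lhs => rw [h2]
    conv_rhs => rw [h2]
    simp only [Matrix.mulVec_smul, Matrix.mulVec_mulVec, smul_smul]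
    rw [e5, Matrix.smul_mulVec, smul_smul]
    rw [← Matrix.mulVec_mulVec, hUz, Matrix.mulVec_smul, Matrix.mulVec_mulVec, smul_smul,
      ← Matrix.mul_assoc D Mi U]
    congr 1
    field_simp
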